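/- Revenue-ordered assortments can be arbitrarily bad under the Threshold Luce model: consider N+1 products where product 1 has price p₁ > 0 and attractiveness a₁ > 0, products 2,…,N+1 each have price α·p₁ (0 < α < 1) and attractiveness γ·a₁ (γ > 0), the outside option has attractiveness a₀ > 0, and product 1 dominates all other products. Then the ratio of the revenue R' = p₁·a₁/(a₁+a₀) of assortment {1} to the revenue R*_N = (N·α·p₁·γ·a₁)/(N·α·γ·a₁ + a₀) of the assortment of the other N products converges, as N → ∞, to a₁/(a₁+a₀), which is strictly less than 1 and can be made arbitrarily small by increasing a₀. -/

import Mathlib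

open Filter

/-- Revenue-ordered assortments can be arbitrarily bad under the Threshold Luce model:
the ratio of the revenue of `{1}` to the revenue of the `N` dominated products tends to
`a₁/(a₁+a₀) < 1` as `N → ∞`, a quantity that can be made arbitrarily small by
increasing `a₀`. -/
theorem revenue_ordered_arbitrarily_bad (p1 a1 a0 α γ : ℝ)
    (hp1 : 0 < p1) (ha1 : 0 < a1) (ha0 : 0 < a0)
    (hα0 : 0 < α) (hα1 : α < 1) (hγ : 0 < γ) :
    Tendsto (fun N : ℕ =>
        (p1 * a1 / (a1 + a0)) /
          ((N * α * p1 * γ * a1) / (N * α * γ * a1 + a0)))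
      atTop (nhds (a1 / (a1 + a0))) ∧
    a1 / (a1 + a0) < 1 ∧
    ∀ ε : ℝ, 0 < ε → ∃ b : ℝ, 0 < b ∧ a1 / (a1 + b) < ε := by
  have hden : 0 < a1 + a0 := by linarith
  refine ⟨?_, ?_, ?_⟩
  · -- limit
    have h0 : Tendsto (fun N : ℕ => a0 / N) atTop (nhds 0) :=
      tendsto_const_div_atTop_nhds_zero_nat a0
    have hαγ : (0:ℝ) < α * γ * a1 := by positivity
    have hg : Tendsto (fun N : ℕ => (α * p1 * γ * a1) / (α * γ * a1 + a0 / N))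
        atTop (nhds p1) := by
      have := Tendsto.div (tendsto_const_nhds (x := α * p1 * γ * a1) (f := atTop))
        ((tendsto_const_nhds (x := α * γ * a1) (f := atTop)).add h0) (by positivity)
      simp only [Pi.div_def] at this
      convert this using 2
      field_simp
      ring
    have hmain : Tendsto (fun N : ℕ =>
        (p1 * a1 / (a1 + a0)) / ((α * p1 * γ * a1) / (α * γ * a1 + a0 / N)))
        atTop (nhds (a1 / (a1 + a0))) := by
      have := Tendsto.div (tendsto_const_nhds (x := p1 * a1 / (a1 + a0)) (f := atTop))
        hg hp1.ne'
      simp only [Pi.div_def] at this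
      convert this using 2
      field_simp
    refine hmain.congr' ?_
    filter_upwards [eventually_gt_atTop 0] with N hN
    have hN' : (0:ℝ) < (N:ℝ) := by exact_mod_cast hN
    congr 1
    rw [div_eq_div_iff (by positivity) (by positivity)]
    field_simp
  · rw [div_lt_one hden]; linarith
  · intro ε hε
    refine ⟨a1 / ε + a1, by positivity, ?_⟩
    rw [div_lt_iff₀ (by positivity)]
    have : a1 / ε < a1 + (a1 / ε + a1) := by have : 0 < a1 := ha1; linarith
    calc a1 = ε * (a1 / ε) := by field_simp
    _ < ε * (a1 + (a1 / ε + a1)) := by exact mul_lt_mul_of_pos_left this hε
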